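/- Strong Liouville property for discrete p-harmonious functions: Let d ≥ 1 and 0 ≤ α < 1. If u : ℤ^d → ℝ is nonnegative and satisfies u(x) = (α/2)·( max_{1≤j≤2d} u(x+e_j) + min_{1≤j≤2d} u(x+e_j) ) + ((1−α)/(2d))·Σ_{j=1}^{2d} u(x+e_j) for every x ∈ ℤ^d, then u is constant. -/

import Mathlib

set_option maxHeartbeats 1000000

/-- The `2d` lattice directions on `ℤ^d`: for `j < d` this is the standard basis
vector `e_j`, and for `d ≤ j < 2d` it is `-e_{j-d}`. -/
def nbr (d : ℕ) (j : Fin (2 * d)) : Fin d → ℤ :=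
  fun i => if (j : ℕ) = (i : ℕ) then 1 else if (j : ℕ) = (i : ℕ) + d then -1 else 0

/-- `u : ℤ^d → ℝ` is `F`-harmonic if `u x = F (u (x+e_1), …, u (x+e_{2d}))` for all `x`. -/
def IsFHarmonic (d : ℕ) (F : (Fin (2 * d) → ℝ) → ℝ) (u : (Fin d → ℤ) → ℝ) : Prop :=
  ∀ x : Fin d → ℤ, u x = F fun j => u fun i => x i + nbr d j i

namespace LiouvillePH

open Finset Filter Topology

variable {d : ℕ} {α : ℝ}

/-- One lattice step. -/
def Nb (x : Fin d → ℤ) (j : Fin (2 * d)) : Fin d → ℤ := fun i => x i + nbr d j i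

lemma hne (hd : 0 < d) : (Finset.univ : Finset (Fin (2 * d))).Nonempty :=
  ⟨⟨0, by omega⟩, Finset.mem_univ _⟩

/-- Nonnegative solutions of the p-harmonious equation. -/
def Sol (d : ℕ) (hd : 0 < d) (α : ℝ) (u : (Fin d → ℤ) → ℝ) : Prop :=
  (∀ x, 0 ≤ u x) ∧ ∀ x, u x =
    (α / 2) * (Finset.univ.sup' (hne hd) (fun j => u (Nb x j)) +
      Finset.univ.inf' (hne hd) (fun j => u (Nb x j))) +
    ((1 - α) / (2 * (d : ℝ))) * ∑ j, u (Nb x j)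

noncomputable def gam (d : ℕ) (α : ℝ) : ℝ := (1 - α) / (2 * (d : ℝ))

lemma gam_pos (hd : 0 < d) (hα1 : α < 1) : 0 < gam d α := by
  have h : (0:ℝ) < d := by exact_mod_cast hd
  exact div_pos (by linarith) (by linarith)

/-- reversal of a direction -/
def rev (j : Fin (2 * d)) : Fin (2 * d) :=
  ⟨(j + d) % (2 * d), Nat.mod_lt _ (by have := j.isLt; omega)⟩

lemma rev_val (j : Fin (2 * d)) :
    (rev j : ℕ) = if (j : ℕ) < d then (j : ℕ) + d else (j : ℕ) - d := by
  have hj := j.isLt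
  rcases lt_or_ge (j : ℕ) d with h | h
  · rw [if_pos h]
    exact Nat.mod_eq_of_lt (by omega)
  · rw [if_neg (not_lt.2 h)]
    show ((j:ℕ) + d) % (2 * d) = (j:ℕ) - d
    rw [Nat.mod_eq_sub_mod (by omega)]
    have h2 : (j : ℕ) + d - 2 * d = (j : ℕ) - d := by omega
    rw [h2]
    exact Nat.mod_eq_of_lt (by omega)

lemma nbr_rev (j : Fin (2 * d)) (i : Fin d) : nbr d (rev j) i + nbr d j i = 0 := by
  have hj := j.isLt
  have hi := i.isLt
  have hv := rev_val j
  unfold nbr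
  rw [hv]
  split_ifs <;> omega

lemma Nb_rev (x : Fin d → ℤ) (j : Fin (2 * d)) : Nb (Nb x j) (rev j) = x := by
  funext i
  have := nbr_rev j i
  simp only [Nb]
  omega

/-- ℓ¹ distance -/
def dist1 (x y : Fin d → ℤ) : ℕ := ∑ i, (x i - y i).natAbs

lemma dist1_eq_zero {x y : Fin d → ℤ} (h : dist1 x y = 0) : x = y := by
  funext i
  have := (Finset.sum_eq_zero_iff.1 h) i (Finset.mem_univ i)
  omega

lemma step_decomp (x y : Fin d → ℤ) (h : dist1 x y ≠ 0) :
    ∃ (y' : Fin d → ℤ) (j : Fin (2 * d)), y = Nb y' j ∧ dist1 x y' + 1 = dist1 x y := by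
  have hex : ∃ i : Fin d, (x i - y i).natAbs ≠ 0 := by
    by_contra h'
    push_neg at h'
    exact h (Finset.sum_eq_zero fun i _ => h' i)
  obtain ⟨i, hi⟩ := hex
  have hd' : (i : ℕ) < d := i.isLt
  rcases lt_or_ge (x i) (y i) with hlt | hge
  · -- x i < y i : y = y' + e_i with y' = y - e_i
    refine ⟨Function.update y i (y i - 1), ⟨(i : ℕ), by omega⟩, ?_, ?_⟩
    · funext k
      show y k = Function.update y i (y i - 1) k + nbr d ⟨(i:ℕ), by omega⟩ k
      have hval : (((⟨(i:ℕ), by omega⟩ : Fin (2*d))) : ℕ) = (i:ℕ) := rfl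
      unfold nbr
      rw [hval]
      rcases eq_or_ne k i with rfl | hk
      · rw [Function.update_self, if_pos rfl]
        ring
      · rw [Function.update_of_ne hk]
        have h1 : ¬ ((i:ℕ) = (k:ℕ)) := fun hc => hk (Fin.ext hc.symm)
        have h2 : ¬ ((i:ℕ) = (k:ℕ) + d) := by have := k.isLt; omega
        rw [if_neg h1, if_neg h2]
        ring
    · unfold dist1
      rw [← Finset.add_sum_erase _ _ (Finset.mem_univ i),
          ← Finset.add_sum_erase _ _ (Finset.mem_univ i)]
      have hterm : (x i - Function.update y i (y i - 1) i).natAbs + 1 = (x i - y i).natAbs := by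
        rw [Function.update_self]; omega
      have hrest : ∀ k ∈ Finset.univ.erase i,
          (x k - Function.update y i (y i - 1) k).natAbs = (x k - y k).natAbs := by
        intro k hk
        rw [Function.update_of_ne (Finset.ne_of_mem_erase hk)]
      rw [Finset.sum_congr rfl hrest]
      omega
  · -- x i > y i (can't be equal since natAbs ≠ 0) : y = y' - e_i with y' = y + e_i
    have hgt : y i < x i := by omega
    refine ⟨Function.update y i (y i + 1), ⟨(i : ℕ) + d, by omega⟩, ?_, ?_⟩
    · funext k
      show y k = Function.update y i (y i + 1) k + nbr d ⟨(i:ℕ) + d, by omega⟩ k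
      have hval : (((⟨(i:ℕ) + d, by omega⟩ : Fin (2*d))) : ℕ) = (i:ℕ) + d := rfl
      unfold nbr
      rw [hval]
      rcases eq_or_ne k i with rfl | hk
      · rw [Function.update_self]
        have h1 : ¬ ((k:ℕ) + d = (k:ℕ)) := by omega
        rw [if_neg h1, if_pos rfl]
        ring
      · rw [Function.update_of_ne hk]
        have h1 : ¬ ((i:ℕ) + d = (k:ℕ)) := by have := k.isLt; omega
        have h2 : ¬ ((i:ℕ) + d = (k:ℕ) + d) := fun hc => hk (Fin.ext (by omega))
        rw [if_neg h1, if_neg h2]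
        ring
    · unfold dist1
      rw [← Finset.add_sum_erase _ _ (Finset.mem_univ i),
          ← Finset.add_sum_erase _ _ (Finset.mem_univ i)]
      have hterm : (x i - Function.update y i (y i + 1) i).natAbs + 1 = (x i - y i).natAbs := by
        rw [Function.update_self]; omega
      have hrest : ∀ k ∈ Finset.univ.erase i,
          (x k - Function.update y i (y i + 1) k).natAbs = (x k - y k).natAbs := by
        intro k hk
        rw [Function.update_of_ne (Finset.ne_of_mem_erase hk)]
      rw [Finset.sum_congr rfl hrest]
      omega

/-- spreading a neighbour-closed predicate over ℤ^d -/
lemma spread (P : (Fin d → ℤ) → Prop) (x₀ : Fin d → ℤ) (h0 : P x₀)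
    (hstep : ∀ x, P x → ∀ j, P (Nb x j)) : ∀ x, P x := by
  have key : ∀ (n : ℕ) (x : Fin d → ℤ), dist1 x₀ x = n → P x := by
    intro n
    induction n with
    | zero => intro x hx; rwa [← dist1_eq_zero hx]
    | succ n ih =>
      intro x hx
      obtain ⟨y', j, rfl, hstepd⟩ := step_decomp x₀ x (by omega)
      exact hstep y' (ih y' (by omega)) j
  intro x
  exact key (dist1 x₀ x) x rfl

lemma sol_nonneg_supinf (hd : 0 < d) {u : (Fin d → ℤ) → ℝ} (hu0 : ∀ x, 0 ≤ u x)
    (x : Fin d → ℤ) :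
    0 ≤ Finset.univ.sup' (hne hd) (fun j => u (Nb x j)) +
        Finset.univ.inf' (hne hd) (fun j => u (Nb x j)) := by
  have h1 : 0 ≤ Finset.univ.inf' (hne hd) (fun j => u (Nb x j)) :=
    Finset.le_inf' _ _ (fun j _ => hu0 _)
  have h2 : Finset.univ.inf' (hne hd) (fun j => u (Nb x j)) ≤
      Finset.univ.sup' (hne hd) (fun j => u (Nb x j)) := by
    obtain ⟨j₀, hj₀⟩ := hne hd
    exact le_trans (Finset.inf'_le _ hj₀) (Finset.le_sup' (fun j => u (Nb x j)) hj₀)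
  linarith

lemma sol_ge (hd : 0 < d) (hα0 : 0 ≤ α) (hα1 : α < 1) {u : (Fin d → ℤ) → ℝ}
    (hu : Sol d hd α u) (x : Fin d → ℤ) (j : Fin (2 * d)) :
    gam d α * u (Nb x j) ≤ u x := by
  rw [hu.2 x]
  have h1 : 0 ≤ (α / 2) * (Finset.univ.sup' (hne hd) (fun j => u (Nb x j)) +
      Finset.univ.inf' (hne hd) (fun j => u (Nb x j))) :=
    mul_nonneg (by linarith) (sol_nonneg_supinf hd hu.1 x)
  have h2 : u (Nb x j) ≤ ∑ k, u (Nb x k) :=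
    Finset.single_le_sum (fun k _ => hu.1 _) (Finset.mem_univ j)
  have h3 : gam d α * u (Nb x j) ≤ ((1 - α) / (2 * (d:ℝ))) * ∑ k, u (Nb x k) :=
    mul_le_mul_of_nonneg_left h2 (le_of_lt (gam_pos hd hα1))
  linarith

lemma sol_le (hd : 0 < d) (hα0 : 0 ≤ α) (hα1 : α < 1) {u : (Fin d → ℤ) → ℝ}
    (hu : Sol d hd α u) (x : Fin d → ℤ) (j : Fin (2 * d)) :
    gam d α * u x ≤ u (Nb x j) := by
  have := sol_ge hd hα0 hα1 hu (Nb x j) (rev j)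
  rwa [Nb_rev] at this

lemma sol_pos (hd : 0 < d) (hα0 : 0 ≤ α) (hα1 : α < 1) {u : (Fin d → ℤ) → ℝ}
    (hu : Sol d hd α u) (x₀ : Fin d → ℤ) (h : 0 < u x₀) : ∀ x, 0 < u x := by
  refine spread (fun x => 0 < u x) x₀ h (fun x hx j => ?_)
  exact lt_of_lt_of_le (mul_pos (gam_pos hd hα1) hx) (sol_le hd hα0 hα1 hu x j)

lemma sol_chain (hd : 0 < d) (hα0 : 0 ≤ α) (hα1 : α < 1) {u : (Fin d → ℤ) → ℝ}
    (hu : Sol d hd α u) :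
    ∀ (n : ℕ) (x y : Fin d → ℤ), dist1 x y = n → gam d α ^ n * u y ≤ u x := by
  intro n
  induction n with
  | zero => intro x y h; rw [dist1_eq_zero h, pow_zero, one_mul]
  | succ n ih =>
    intro x y h
    obtain ⟨y', j, rfl, hstepd⟩ := step_decomp x y (by omega)
    have h1 : gam d α ^ n * u y' ≤ u x := ih x y' (by omega)
    have h2 : gam d α * u (Nb y' j) ≤ u y' := sol_ge hd hα0 hα1 hu y' j
    have hg : 0 ≤ gam d α ^ n := le_of_lt (pow_pos (gam_pos hd hα1) n)
    calc gam d α ^ (n+1) * u (Nb y' j) = gam d α ^ n * (gam d α * u (Nb y' j)) := by ring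
    _ ≤ gam d α ^ n * u y' := mul_le_mul_of_nonneg_left h2 hg
    _ ≤ u x := h1

lemma sol_ub (hd : 0 < d) (hα0 : 0 ≤ α) (hα1 : α < 1) {u : (Fin d → ℤ) → ℝ}
    (hu : Sol d hd α u) (h1 : u 0 = 1) (x : Fin d → ℤ) :
    u x ≤ (gam d α ^ dist1 0 x)⁻¹ := by
  have hch := sol_chain hd hα0 hα1 hu (dist1 0 x) 0 x rfl
  rw [h1] at hch
  have hp : 0 < gam d α ^ dist1 0 x := pow_pos (gam_pos hd hα1) _
  rw [inv_eq_one_div, le_div_iff₀ hp]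
  linarith

/-- the constant function 1 is a solution -/
lemma sol_one (hd : 0 < d) : Sol d hd α (fun _ => 1) := by
  constructor
  · intro x; norm_num
  · intro x
    have hd' : (d:ℝ) ≠ 0 := by
      have : (0:ℝ) < d := by exact_mod_cast hd
      linarith
    show (1:ℝ) = (α / 2) * (Finset.univ.sup' (hne hd) (fun _ => (1:ℝ)) +
      Finset.univ.inf' (hne hd) (fun _ => (1:ℝ))) +
      ((1 - α) / (2 * (d : ℝ))) * ∑ _j : Fin (2*d), (1:ℝ)
    rw [Finset.sup'_const, Finset.inf'_const, Finset.sum_const, Finset.card_univ,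
      Fintype.card_fin, nsmul_eq_mul]
    push_cast
    field_simp
    ring

/-- the constant function 0 is a solution -/
lemma sol_zero (hd : 0 < d) : Sol d hd α (fun _ => 0) := by
  refine ⟨fun x => le_refl 0, fun x => ?_⟩
  show (0:ℝ) = (α / 2) * (Finset.univ.sup' (hne hd) (fun _ => (0:ℝ)) +
    Finset.univ.inf' (hne hd) (fun _ => (0:ℝ))) +
    ((1 - α) / (2 * (d : ℝ))) * ∑ _j : Fin (2*d), (0:ℝ)
  rw [Finset.sup'_const, Finset.inf'_const, Finset.sum_const, Finset.card_univ,
    Fintype.card_fin, nsmul_eq_mul]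
  ring

lemma sup'_const_mul (hd : 0 < d) (c : ℝ) (hc : 0 ≤ c) (f : Fin (2*d) → ℝ) :
    Finset.univ.sup' (hne hd) (fun j => c * f j) = c * Finset.univ.sup' (hne hd) f := by
  apply le_antisymm
  · exact Finset.sup'_le _ _ fun j _ =>
      mul_le_mul_of_nonneg_left (Finset.le_sup' f (Finset.mem_univ j)) hc
  · obtain ⟨j₀, _, hj₀⟩ := Finset.exists_mem_eq_sup' (hne hd) f
    rw [hj₀]
    exact Finset.le_sup' (fun j => c * f j) (Finset.mem_univ j₀)

lemma inf'_const_mul (hd : 0 < d) (c : ℝ) (hc : 0 ≤ c) (f : Fin (2*d) → ℝ) :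
    Finset.univ.inf' (hne hd) (fun j => c * f j) = c * Finset.univ.inf' (hne hd) f := by
  apply le_antisymm
  · obtain ⟨j₀, _, hj₀⟩ := Finset.exists_mem_eq_inf' (hne hd) f
    rw [hj₀]
    exact Finset.inf'_le (fun j => c * f j) (Finset.mem_univ j₀)
  · exact Finset.le_inf' _ _ fun j _ =>
      mul_le_mul_of_nonneg_left (Finset.inf'_le f (Finset.mem_univ j)) hc

lemma sol_smul (hd : 0 < d) {u : (Fin d → ℤ) → ℝ} (hu : Sol d hd α u)
    (c : ℝ) (hc : 0 ≤ c) : Sol d hd α (fun x => c * u x) := by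
  constructor
  · intro x; exact mul_nonneg hc (hu.1 x)
  · intro x
    show c * u x = _
    rw [hu.2 x]
    rw [sup'_const_mul hd c hc, inf'_const_mul hd c hc, ← Finset.mul_sum]
    ring

lemma sol_shift (hd : 0 < d) {u : (Fin d → ℤ) → ℝ} (hu : Sol d hd α u)
    (t : Fin d → ℤ) : Sol d hd α (fun x => u (fun i => x i + t i)) := by
  constructor
  · intro x; exact hu.1 _
  · intro x
    have key : ∀ j : Fin (2*d), Nb (fun i => x i + t i) j = (fun i => Nb x j i + t i) := by
      intro j; funext i; simp only [Nb]; ring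
    have h := hu.2 (fun i => x i + t i)
    simp only [key] at h
    exact h

/-- normalized shift -/
noncomputable def nshift (u : (Fin d → ℤ) → ℝ) (t : Fin d → ℤ) : (Fin d → ℤ) → ℝ :=
  fun x => (u t)⁻¹ * u (fun i => x i + t i)

/-- comparison / equality propagation -/
lemma sol_eq_of_le (hd : 0 < d) (hα0 : 0 ≤ α) (hα1 : α < 1)
    {u₁ u₂ : (Fin d → ℤ) → ℝ} (h1 : Sol d hd α u₁) (h2 : Sol d hd α u₂)
    (hle : ∀ x, u₁ x ≤ u₂ x) (x₀ : Fin d → ℤ) (heq : u₂ x₀ = u₁ x₀) :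
    ∀ x, u₂ x = u₁ x := by
  refine spread (fun x => u₂ x = u₁ x) x₀ heq (fun x hx j => ?_)
  -- at a contact point all neighbours are contact points
  have hS : Finset.univ.sup' (hne hd) (fun k => u₁ (Nb x k)) ≤
      Finset.univ.sup' (hne hd) (fun k => u₂ (Nb x k)) :=
    Finset.sup'_le _ _ fun k _ =>
      le_trans (hle (Nb x k)) (Finset.le_sup' (fun k => u₂ (Nb x k)) (Finset.mem_univ k))
  have hI : Finset.univ.inf' (hne hd) (fun k => u₁ (Nb x k)) ≤
      Finset.univ.inf' (hne hd) (fun k => u₂ (Nb x k)) :=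
    Finset.le_inf' _ _ fun k _ =>
      le_trans (Finset.inf'_le (fun k => u₁ (Nb x k)) (Finset.mem_univ k)) (hle (Nb x k))
  have hsum : ∑ k, (u₂ (Nb x k) - u₁ (Nb x k)) = 0 := by
    have e1 := h1.2 x
    have e2 := h2.2 x
    have hgam : 0 < (1 - α) / (2 * (d:ℝ)) := gam_pos hd hα1
    have hssum : ∑ k, u₁ (Nb x k) ≤ ∑ k, u₂ (Nb x k) :=
      Finset.sum_le_sum fun k _ => hle (Nb x k)
    rw [Finset.sum_sub_distrib]
    have hle2 : ∑ k, u₂ (Nb x k) ≤ ∑ k, u₁ (Nb x k) := by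
      by_contra hcon
      push_neg at hcon
      have : u₁ x < u₂ x := by
        rw [e1, e2]
        have := mul_lt_mul_of_pos_left hcon hgam
        have h4 : (α/2) * (Finset.univ.sup' (hne hd) (fun k => u₁ (Nb x k)) +
            Finset.univ.inf' (hne hd) (fun k => u₁ (Nb x k))) ≤
            (α/2) * (Finset.univ.sup' (hne hd) (fun k => u₂ (Nb x k)) +
            Finset.univ.inf' (hne hd) (fun k => u₂ (Nb x k))) :=
          mul_le_mul_of_nonneg_left (by linarith) (by linarith)
        linarith
      linarith [hx, hle x]
    linarith
  have := (Finset.sum_eq_zero_iff_of_nonneg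
    (fun k _ => sub_nonneg.2 (hle (Nb x k)))).1 hsum j (Finset.mem_univ j)
  linarith [this]

/-- limits of sup' along a filter -/
lemma tendsto_sup' {ι β : Type*} (s : Finset ι) (hs : s.Nonempty) {l : Filter β}
    {f : β → ι → ℝ} {g : ι → ℝ} (h : ∀ i, Tendsto (fun b => f b i) l (𝓝 (g i))) :
    Tendsto (fun b => s.sup' hs (f b)) l (𝓝 (s.sup' hs g)) := by
  induction hs using Finset.Nonempty.cons_induction with
  | singleton a => simpa using h a
  | cons a s ha hs ih =>
    simp only [Finset.sup'_cons hs]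
    exact (h a).max ih

lemma tendsto_inf' {ι β : Type*} (s : Finset ι) (hs : s.Nonempty) {l : Filter β}
    {f : β → ι → ℝ} {g : ι → ℝ} (h : ∀ i, Tendsto (fun b => f b i) l (𝓝 (g i))) :
    Tendsto (fun b => s.inf' hs (f b)) l (𝓝 (s.inf' hs g)) := by
  induction hs using Finset.Nonempty.cons_induction with
  | singleton a => simpa using h a
  | cons a s ha hs ih =>
    simp only [Finset.inf'_cons hs]
    exact (h a).min ih

/-- a good class of solutions -/
structure Good (d : ℕ) (hd : 0 < d) (α : ℝ) (U : Ultrafilter ℕ)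
    (C : Set ((Fin d → ℤ) → ℝ)) : Prop where
  ne : C.Nonempty
  sol : ∀ v ∈ C, Sol d hd α v
  one : ∀ v ∈ C, v 0 = 1
  shift : ∀ v ∈ C, ∀ t, nshift v t ∈ C
  lim : ∀ (vs : ℕ → (Fin d → ℤ) → ℝ) (w : (Fin d → ℤ) → ℝ), (∀ n, vs n ∈ C) →
        (∀ x, Tendsto (fun n => vs n x) (U : Filter ℕ) (𝓝 (w x))) → w ∈ C

lemma Good.pos {U : Ultrafilter ℕ} {C : Set ((Fin d → ℤ) → ℝ)}
    (hd : 0 < d) (hα0 : 0 ≤ α) (hα1 : α < 1)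
    (hC : Good d hd α U C) {v : (Fin d → ℤ) → ℝ} (hv : v ∈ C) (x : Fin d → ℤ) : 0 < v x :=
  sol_pos hd hα0 hα1 (hC.sol v hv) 0 (by rw [hC.one v hv]; norm_num) x

/-- main extraction lemma: the extremal ratio in direction j is realized by a
multiplicative solution, and cutting down to those preserves goodness -/
lemma extract (hd : 0 < d) (hα0 : 0 ≤ α) (hα1 : α < 1) {U : Ultrafilter ℕ}
    (hU : (U : Filter ℕ) ≤ atTop) {C : Set ((Fin d → ℤ) → ℝ)}
    (hC : Good d hd α U C) (j : Fin (2 * d)) :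
    ∃ θ : ℝ, 0 < θ ∧ (∀ v ∈ C, ∀ x, θ * v x ≤ v (Nb x j)) ∧
      Good d hd α U {v | v ∈ C ∧ ∀ x, v (Nb x j) = θ * v x} := by
  classical
  set R : Set ℝ := {r : ℝ | ∃ v ∈ C, ∃ x, r = v (Nb x j) / v x} with hR
  obtain ⟨v₀, hv₀⟩ := hC.ne
  have hRne : R.Nonempty := ⟨_, v₀, hv₀, 0, rfl⟩
  have hRlb : ∀ r ∈ R, gam d α ≤ r := by
    rintro r ⟨v, hv, x, rfl⟩
    have hvx : 0 < v x := Good.pos hd hα0 hα1 hC hv x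
    rw [le_div_iff₀ hvx]
    exact sol_le hd hα0 hα1 (hC.sol v hv) x j
  have hbdd : BddBelow R := ⟨gam d α, hRlb⟩
  set θ := sInf R with hθ
  have hθγ : gam d α ≤ θ := le_csInf hRne hRlb
  have hθpos : 0 < θ := lt_of_lt_of_le (gam_pos hd hα1) hθγ
  have hbound : ∀ v ∈ C, ∀ x, θ * v x ≤ v (Nb x j) := by
    intro v hv x
    have hvx : 0 < v x := Good.pos hd hα0 hα1 hC hv x
    have : θ ≤ v (Nb x j) / v x := csInf_le hbdd ⟨v, hv, x, rfl⟩
    rw [le_div_iff₀ hvx] at this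
    exact this
  -- minimizing sequence
  have hseq : ∀ n : ℕ, ∃ v ∈ C, ∃ x : Fin d → ℤ,
      v (Nb x j) / v x < θ + 1 / (n + 1) := by
    intro n
    have hε : (0:ℝ) < 1 / (n + 1) := by positivity
    obtain ⟨r, hrR, hrlt⟩ := Real.lt_sInf_add_pos hRne hε
    obtain ⟨v, hv, x, rfl⟩ := hrR
    exact ⟨v, hv, x, hrlt⟩
  choose vn hvnC xn hxn using hseq
  set wn : ℕ → (Fin d → ℤ) → ℝ := fun n => nshift (vn n) (xn n) with hwn
  have hwnC : ∀ n, wn n ∈ C := fun n => hC.shift (vn n) (hvnC n) (xn n)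
  -- ratio of wn at the origin
  have hwnr : ∀ n, wn n (Nb 0 j) = vn n (Nb (xn n) j) / vn n (xn n) := by
    intro n
    show (vn n (xn n))⁻¹ * vn n (fun i => Nb 0 j i + xn n i) = _
    have harg : (fun i => Nb 0 j i + xn n i) = Nb (xn n) j := by
      funext i; simp only [Nb, Pi.zero_apply]; ring
    rw [harg, div_eq_inv_mul]
  -- ultrafilter limit
  have hbnd : ∀ x n, wn n x ∈ Set.Icc (0:ℝ) ((gam d α ^ dist1 0 x)⁻¹) := by
    intro x n
    have hs := hC.sol _ (hwnC n)
    have ho := hC.one _ (hwnC n)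
    exact ⟨hs.1 x, sol_ub hd hα0 hα1 hs ho x⟩
  have hex : ∀ x : Fin d → ℤ, ∃ l, Tendsto (fun n => wn n x) (U : Filter ℕ) (𝓝 l) := by
    intro x
    have hcpt : IsCompact (Set.Icc (0:ℝ) ((gam d α ^ dist1 0 x)⁻¹)) := isCompact_Icc
    have hmem : Set.Icc (0:ℝ) ((gam d α ^ dist1 0 x)⁻¹) ∈ U.map (fun n => wn n x) := by
      apply Filter.mem_map.2
      exact Filter.univ_mem' (fun n => hbnd x n)
    obtain ⟨l, _, hl⟩ := hcpt.ultrafilter_le_nhds (U.map (fun n => wn n x))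
      (Filter.le_principal_iff.2 hmem)
    refine ⟨l, ?_⟩
    rw [Ultrafilter.coe_map] at hl
    exact hl
  choose w hw using hex
  have hwC : w ∈ C := hC.lim wn w hwnC hw
  -- the limit attains the extremal ratio at the origin
  have hratio : w (Nb 0 j) = θ := by
    have ht1 : Tendsto (fun n => wn n (Nb 0 j)) atTop (𝓝 θ) := by
      have hle1 : ∀ n : ℕ, θ ≤ wn n (Nb 0 j) := by
        intro n
        rw [hwnr n]
        exact csInf_le hbdd ⟨vn n, hvnC n, xn n, rfl⟩
      have hle2 : ∀ n : ℕ, wn n (Nb 0 j) ≤ θ + 1 / (n + 1) := by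
        intro n
        rw [hwnr n]
        exact le_of_lt (hxn n)
      have htu : Tendsto (fun n : ℕ => θ + 1 / ((n:ℝ) + 1)) atTop (𝓝 θ) := by
        have := tendsto_one_div_add_atTop_nhds_zero_nat (𝕜 := ℝ)
        have h2 := this.const_add θ
        simpa using h2
      exact tendsto_of_tendsto_of_tendsto_of_le_of_le tendsto_const_nhds htu hle1 hle2
    exact tendsto_nhds_unique (hw (Nb 0 j)) (ht1.mono_left hU)
  -- multiplicativity of the extremal solution
  have hmult : ∀ x, w (Nb x j) = θ * w x := by
    have hSol2 : Sol d hd α (fun x => w (Nb x j)) := by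
      have := sol_shift hd (hC.sol w hwC) (fun i => nbr d j i)
      exact this
    have hSol1 : Sol d hd α (fun x => θ * w x) := sol_smul hd (hC.sol w hwC) θ (le_of_lt hθpos)
    have hle' : ∀ x, θ * w x ≤ w (Nb x j) := hbound w hwC
    have heq0 : w (Nb 0 j) = θ * w 0 := by
      rw [hratio, hC.one w hwC, mul_one]
    exact sol_eq_of_le hd hα0 hα1 hSol1 hSol2 hle' 0 heq0
  refine ⟨θ, hθpos, hbound, ?_⟩
  constructor
  · exact ⟨w, hwC, hmult⟩
  · exact fun v hv => hC.sol v hv.1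
  · exact fun v hv => hC.one v hv.1
  · rintro v ⟨hvC, hvm⟩ t
    refine ⟨hC.shift v hvC t, fun x => ?_⟩
    show (v t)⁻¹ * v (fun i => Nb x j i + t i) = θ * ((v t)⁻¹ * v (fun i => x i + t i))
    have harg : (fun i => Nb x j i + t i) = Nb (fun i => x i + t i) j := by
      funext i; simp only [Nb]; ring
    rw [harg, hvm]
    ring
  · rintro vs w' hvs hw'
    refine ⟨hC.lim vs w' (fun n => (hvs n).1) hw', fun x => ?_⟩
    have t1 : Tendsto (fun n => vs n (Nb x j)) (U : Filter ℕ) (𝓝 (w' (Nb x j))) :=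
      hw' (Nb x j)
    have t2 : Tendsto (fun n => vs n (Nb x j)) (U : Filter ℕ) (𝓝 (θ * w' x)) := by
      have := (hw' x).const_mul θ
      refine this.congr (fun n => ?_)
      exact ((hvs n).2 x).symm
    exact tendsto_nhds_unique t1 t2

/-- positive axis direction -/
def axisP (i : Fin d) : Fin (2 * d) := ⟨(i : ℕ), by have := i.isLt; omega⟩

/-- negative axis direction -/
def axisN (i : Fin d) : Fin (2 * d) := ⟨(i : ℕ) + d, by have := i.isLt; omega⟩

lemma rev_axisN (i : Fin d) : rev (axisN i) = axisP i := by
  have hi := i.isLt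
  apply Fin.ext
  rw [rev_val]
  have h1 : ((axisN i : Fin (2*d)) : ℕ) = (i:ℕ) + d := rfl
  have h2 : ((axisP i : Fin (2*d)) : ℕ) = (i:ℕ) := rfl
  rw [h1, h2, if_neg (by omega)]
  omega

/-- from multiplicativity in the positive direction get it in the negative direction -/
lemma mult_neg {w : (Fin d → ℤ) → ℝ} {θ : ℝ} (hθ : θ ≠ 0) (i : Fin d)
    (hm : ∀ x, w (Nb x (axisP i)) = θ * w x) :
    ∀ x, w (Nb x (axisN i)) = θ⁻¹ * w x := by
  intro x
  have h1 := hm (Nb x (axisN i))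
  rw [← rev_axisN i, Nb_rev] at h1
  field_simp at h1 ⊢
  linarith [h1]

/-- rigidity: a fully multiplicative positive solution is constant -/
lemma rigidity (hd : 0 < d) (hα0 : 0 ≤ α) (hα1 : α < 1) {w : (Fin d → ℤ) → ℝ}
    (hw : Sol d hd α w) (h1 : w 0 = 1) (θ : Fin d → ℝ) (hθ : ∀ i, 0 < θ i)
    (hm : ∀ (i : Fin d) (x), w (Nb x (axisP i)) = θ i * w x) : ∀ i, θ i = 1 := by
  have hwpos : ∀ x, 0 < w x := sol_pos hd hα0 hα1 hw 0 (by rw [h1]; norm_num)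
  set c : Fin (2 * d) → ℝ := fun j => w (Nb 0 j) with hc
  have hcP : ∀ i : Fin d, c (axisP i) = θ i := by
    intro i
    show w (Nb 0 (axisP i)) = θ i
    rw [hm i 0, h1, mul_one]
  have hcN : ∀ i : Fin d, c (axisN i) = (θ i)⁻¹ := by
    intro i
    show w (Nb 0 (axisN i)) = (θ i)⁻¹
    rw [mult_neg (ne_of_gt (hθ i)) i (hm i) 0, h1, mul_one]
  -- every direction is axisP or axisN
  have hdir : ∀ j : Fin (2 * d), (∃ h : (j : ℕ) < d, j = axisP ⟨(j:ℕ), h⟩) ∨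
      (∃ h' : (j:ℕ) - d < d, j = axisN ⟨(j:ℕ) - d, h'⟩) := by
    intro j
    have hj := j.isLt
    rcases lt_or_ge (j : ℕ) d with h | h
    · exact Or.inl ⟨h, Fin.ext rfl⟩
    · refine Or.inr ⟨by omega, Fin.ext ?_⟩
      show (j:ℕ) = (j:ℕ) - d + d
      omega
  -- reciprocal pairing
  have hpair : ∀ j : Fin (2 * d), c (rev j) * c j = 1 := by
    intro j
    rcases hdir j with ⟨h, hj⟩ | ⟨h', hj⟩
    · rw [hj]
      have hax : rev (axisP ⟨(j:ℕ), h⟩) = axisN ⟨(j:ℕ), h⟩ := by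
        apply Fin.ext
        rw [rev_val]
        have e1 : ((axisP ⟨(j:ℕ), h⟩ : Fin (2*d)) : ℕ) = (j:ℕ) := rfl
        have e2 : ((axisN ⟨(j:ℕ), h⟩ : Fin (2*d)) : ℕ) = (j:ℕ) + d := rfl
        rw [e1, e2, if_pos h]
      rw [hax, hcP, hcN]
      exact inv_mul_cancel₀ (ne_of_gt (hθ _))
    · rw [hj, rev_axisN, hcP, hcN]
      exact mul_inv_cancel₀ (ne_of_gt (hθ _))
  have hcpos : ∀ j, 0 < c j := fun j => hwpos _
  -- sup' + inf' ≥ 2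
  have hsupinf : 2 ≤ Finset.univ.sup' (hne hd) c + Finset.univ.inf' (hne hd) c := by
    obtain ⟨j₀, _, hj₀⟩ := Finset.exists_mem_eq_inf' (hne hd) c
    have hsup : c (rev j₀) ≤ Finset.univ.sup' (hne hd) c :=
      Finset.le_sup' c (Finset.mem_univ _)
    have hp := hpair j₀
    have hpos := hcpos j₀
    have hposr := hcpos (rev j₀)
    rw [hj₀]
    nlinarith [sq_nonneg (c j₀ - 1), sq_nonneg (c (rev j₀) - 1)]
  -- sum = ∑ (θ i + (θ i)⁻¹)
  have hsum : ∑ j, c j = ∑ i : Fin d, (θ i + (θ i)⁻¹) := by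
    have h2d : 2 * d = d + d := by ring
    rw [← Fintype.sum_equiv (finCongr h2d.symm) (fun k => c (finCongr h2d.symm k)) c
      (fun k => rfl)]
    rw [Fin.sum_univ_add]
    have hL : ∀ i : Fin d, c (finCongr h2d.symm (Fin.castAdd d i)) = θ i := by
      intro i
      have he : finCongr h2d.symm (Fin.castAdd d i) = axisP i := by
        apply Fin.ext
        show ((Fin.castAdd d i : Fin (d + d)) : ℕ) = (i:ℕ)
        simp
      rw [he, hcP]
    have hR : ∀ i : Fin d, c (finCongr h2d.symm (Fin.natAdd d i)) = (θ i)⁻¹ := by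
      intro i
      have he : finCongr h2d.symm (Fin.natAdd d i) = axisN i := by
        apply Fin.ext
        show ((Fin.natAdd d i : Fin (d + d)) : ℕ) = (i:ℕ) + d
        simp [Fin.natAdd]
        omega
      rw [he, hcN]
    rw [Finset.sum_congr rfl (fun i _ => hL i), Finset.sum_congr rfl (fun i _ => hR i),
      ← Finset.sum_add_distrib]
  -- each term ≥ 2
  have hterm2 : ∀ i : Fin d, 2 ≤ θ i + (θ i)⁻¹ := by
    intro i
    have hp := hθ i
    have hinv : θ i * (θ i)⁻¹ = 1 := mul_inv_cancel₀ (ne_of_gt hp)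
    nlinarith [sq_nonneg (θ i - 1), mul_pos hp (inv_pos.2 hp)]
  have hsum2d : (2:ℝ) * d ≤ ∑ i : Fin d, (θ i + (θ i)⁻¹) := by
    calc (2:ℝ) * d = ∑ _i : Fin d, (2:ℝ) := by
          rw [Finset.sum_const, Finset.card_univ, Fintype.card_fin, nsmul_eq_mul]; ring
    _ ≤ _ := Finset.sum_le_sum fun i _ => hterm2 i
  -- the equation at 0 forces equality
  have heq := hw.2 0
  rw [h1] at heq
  have hγ := gam_pos hd hα1
  have hdpos : (0:ℝ) < d := by exact_mod_cast hd
  have hγ2d : ((1 - α) / (2 * (d:ℝ))) * (2 * (d:ℝ)) = 1 - α := by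
    field_simp
  have hAterm : α ≤ (α / 2) * (Finset.univ.sup' (hne hd) c + Finset.univ.inf' (hne hd) c) := by
    nlinarith [hsupinf, hα0]
  have hSum_eq : ∑ i : Fin d, (θ i + (θ i)⁻¹) = 2 * d := by
    by_contra hcon
    have hgt : 2 * (d:ℝ) < ∑ i : Fin d, (θ i + (θ i)⁻¹) := lt_of_le_of_ne hsum2d (Ne.symm hcon)
    have : (1:ℝ) < 1 := by
      calc (1:ℝ) = (α / 2) * (Finset.univ.sup' (hne hd) c + Finset.univ.inf' (hne hd) c) +
            ((1 - α) / (2 * (d:ℝ))) * ∑ j, c j := heq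
      _ ≥ α + ((1 - α) / (2 * (d:ℝ))) * ∑ j, c j := by linarith
      _ = α + ((1 - α) / (2 * (d:ℝ))) * ∑ i : Fin d, (θ i + (θ i)⁻¹) := by rw [hsum]
      _ > α + ((1 - α) / (2 * (d:ℝ))) * (2 * d) := by
          have := mul_lt_mul_of_pos_left hgt (gam_pos hd hα1)
          exact (add_lt_add_iff_left α).2 this
      _ = α + (1 - α) := by rw [hγ2d]
      _ = 1 := by ring
    linarith
  -- per-term equality
  have hzero : ∑ i : Fin d, ((θ i + (θ i)⁻¹) - 2) = 0 := by
    rw [Finset.sum_sub_distrib, hSum_eq, Finset.sum_const, Finset.card_univ, Fintype.card_fin,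
      nsmul_eq_mul]
    ring
  intro i
  have hi := (Finset.sum_eq_zero_iff_of_nonneg
    (fun k _ => sub_nonneg.2 (hterm2 k))).1 hzero i (Finset.mem_univ i)
  have hinv : θ i * (θ i)⁻¹ = 1 := mul_inv_cancel₀ (ne_of_gt (hθ i))
  have hsq : (θ i - 1)^2 = 0 := by nlinarith [hθ i]
  have := pow_eq_zero_iff (n := 2) (by norm_num) |>.1 hsq
  linarith [this]

/-- iterated extraction over a finite set of axes -/
lemma stages (hd : 0 < d) (hα0 : 0 ≤ α) (hα1 : α < 1) {U : Ultrafilter ℕ}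
    (hU : (U : Filter ℕ) ≤ atTop) {C : Set ((Fin d → ℤ) → ℝ)} (hC : Good d hd α U C)
    (S : Finset (Fin d)) :
    ∃ (C' : Set ((Fin d → ℤ) → ℝ)) (θ : Fin d → ℝ), Good d hd α U C' ∧ C' ⊆ C ∧
      ∀ i ∈ S, 0 < θ i ∧ ∀ v ∈ C', ∀ x, v (Nb x (axisP i)) = θ i * v x := by
  classical
  induction S using Finset.induction_on with
  | empty => exact ⟨C, fun _ => 1, hC, le_refl _, fun i hi => absurd hi (Finset.notMem_empty i)⟩
  | @insert a S ha ih =>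
    obtain ⟨C₁, θ₁, hG₁, hsub₁, hmul₁⟩ := ih
    obtain ⟨θa, hθa, _, hG₂⟩ := extract hd hα0 hα1 hU hG₁ (axisP a)
    refine ⟨{v | v ∈ C₁ ∧ ∀ x, v (Nb x (axisP a)) = θa * v x}, Function.update θ₁ a θa,
      hG₂, fun v hv => hsub₁ hv.1, ?_⟩
    intro i hi
    rcases Finset.mem_insert.1 hi with rfl | hiS
    · rw [Function.update_self]
      exact ⟨hθa, fun v hv x => hv.2 x⟩
    · have hne' : i ≠ a := by rintro rfl; exact ha hiS
      rw [Function.update_of_ne hne']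
      obtain ⟨hpos, hprop⟩ := hmul₁ i hiS
      exact ⟨hpos, fun v hv x => hprop v hv.1 x⟩

/-- all edge ratios of all normalized solutions are ≥ 1 -/
lemma ratios_ge_one (hd : 0 < d) (hα0 : 0 ≤ α) (hα1 : α < 1)
    {v : (Fin d → ℤ) → ℝ} (hv : Sol d hd α v) (hv0 : v 0 = 1) (j : Fin (2 * d))
    (x : Fin d → ℤ) : v x ≤ v (Nb x j) := by
  classical
  -- the ultrafilter
  let U : Ultrafilter ℕ := Ultrafilter.of atTop
  have hU : (U : Filter ℕ) ≤ atTop := Ultrafilter.of_le atTop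
  -- the class of all normalized solutions
  set K : Set ((Fin d → ℤ) → ℝ) := {w | Sol d hd α w ∧ w 0 = 1} with hK
  have hGoodK : Good d hd α U K := by
    constructor
    · exact ⟨fun _ => 1, sol_one hd, rfl⟩
    · exact fun w hw => hw.1
    · exact fun w hw => hw.2
    · rintro w ⟨hws, hw0⟩ t
      have hwpos : ∀ y, 0 < w y := sol_pos hd hα0 hα1 hws 0 (by rw [hw0]; norm_num)
      constructor
      · exact sol_smul hd (sol_shift hd hws t) ((w t)⁻¹)
          (le_of_lt (inv_pos.2 (hwpos t)))
      · show (w t)⁻¹ * w (fun i => (0:Fin d → ℤ) i + t i) = 1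
        have : (fun i => (0:Fin d → ℤ) i + t i) = t := by
          funext i; simp
        rw [this]
        exact inv_mul_cancel₀ (ne_of_gt (hwpos t))
    · rintro vs w hvs hw
      constructor
      · constructor
        · intro x
          exact le_of_tendsto_of_tendsto' tendsto_const_nhds (hw x)
            (fun n => ((hvs n).1).1 x)
        · intro x
          have hlim : Tendsto (fun n => vs n x) (U : Filter ℕ)
              (𝓝 ((α / 2) * (Finset.univ.sup' (hne hd) (fun k => w (Nb x k)) +
                Finset.univ.inf' (hne hd) (fun k => w (Nb x k))) +
                ((1 - α) / (2 * (d:ℝ))) * ∑ k, w (Nb x k))) := by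
            have hs : Tendsto (fun n => Finset.univ.sup' (hne hd) (fun k => vs n (Nb x k)))
                (U : Filter ℕ) (𝓝 (Finset.univ.sup' (hne hd) (fun k => w (Nb x k)))) :=
              tendsto_sup' _ _ (fun k => hw (Nb x k))
            have hi : Tendsto (fun n => Finset.univ.inf' (hne hd) (fun k => vs n (Nb x k)))
                (U : Filter ℕ) (𝓝 (Finset.univ.inf' (hne hd) (fun k => w (Nb x k)))) :=
              tendsto_inf' _ _ (fun k => hw (Nb x k))
            have hsm : Tendsto (fun n => ∑ k, vs n (Nb x k)) (U : Filter ℕ)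
                (𝓝 (∑ k, w (Nb x k))) :=
              tendsto_finset_sum _ (fun k _ => hw (Nb x k))
            have := (((hs.add hi).const_mul (α / 2)).add
              (hsm.const_mul ((1 - α) / (2 * (d:ℝ)))))
            refine this.congr (fun n => ?_)
            exact (((hvs n).1).2 x).symm
          exact tendsto_nhds_unique (hw x) hlim
      · have : Tendsto (fun n => vs n 0) (U : Filter ℕ) (𝓝 1) := by
          have : (fun n => vs n 0) = fun _ => (1:ℝ) := by
            funext n; exact (hvs n).2
          rw [this]
          exact tendsto_const_nhds
        exact tendsto_nhds_unique (hw 0) this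
  -- stage 1: extract for direction j
  obtain ⟨θ₀, hθ₀pos, hbound₀, hG₁⟩ := extract hd hα0 hα1 hU hGoodK j
  -- stages: full multiplicativity
  obtain ⟨C', θf, hG', hsub', hmul'⟩ := stages hd hα0 hα1 hU hG₁ Finset.univ
  obtain ⟨w, hwC'⟩ := hG'.ne
  have hwSol : Sol d hd α w := hG'.sol w hwC'
  have hw0 : w 0 = 1 := hG'.one w hwC'
  have hθf : ∀ i : Fin d, 0 < θf i := fun i => (hmul' i (Finset.mem_univ i)).1
  have hwm : ∀ (i : Fin d) (x), w (Nb x (axisP i)) = θf i * w x :=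
    fun i x => (hmul' i (Finset.mem_univ i)).2 w hwC' x
  have hθf1 : ∀ i, θf i = 1 := rigidity hd hα0 hα1 hwSol hw0 θf hθf hwm
  -- the stage-1 ratio θ₀ equals 1
  have hwin : w ∈ {v | v ∈ K ∧ ∀ x, v (Nb x j) = θ₀ * v x} := hsub' hwC'
  have hwj : ∀ x, w (Nb x j) = θ₀ * w x := hwin.2
  have hθ₀ : θ₀ = 1 := by
    have hj := j.isLt
    rcases lt_or_ge (j : ℕ) d with h | h
    · have hjax : j = axisP ⟨(j:ℕ), by omega⟩ := Fin.ext rfl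
      have h1 := hwj 0
      rw [hjax, hwm ⟨(j:ℕ), by omega⟩ 0, hθf1, hw0] at h1
      simpa using h1.symm
    · have h' : (j:ℕ) - d < d := by omega
      have hjax : j = axisN ⟨(j:ℕ) - d, h'⟩ := by
        apply Fin.ext
        show (j:ℕ) = (j:ℕ) - d + d
        omega
      have h1 := hwj 0
      have hmn := mult_neg (ne_of_gt (hθf ⟨(j:ℕ) - d, h'⟩)) ⟨(j:ℕ) - d, h'⟩
        (hwm ⟨(j:ℕ) - d, h'⟩) 0
      rw [hjax] at h1
      rw [hmn, hθf1, hw0] at h1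
      simpa using h1.symm
  -- conclude for v
  have hvK : v ∈ K := ⟨hv, hv0⟩
  have := hbound₀ v hvK x
  rw [hθ₀, one_mul] at this
  exact this

end LiouvillePH

open LiouvillePH

/-- Strong Liouville property for discrete `p`-harmonious functions on `ℤ^d`. -/
theorem liouville_pharmonious (d : ℕ) (hd : 0 < d) (α : ℝ) (hα0 : 0 ≤ α) (hα1 : α < 1)
    (u : (Fin d → ℤ) → ℝ) (hu : ∀ x, 0 ≤ u x)
    (hharm : ∀ x : Fin d → ℤ,
      u x = (α / 2) *
          (Finset.univ.sup' ⟨⟨0, by omega⟩, Finset.mem_univ _⟩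
              (fun j : Fin (2 * d) => u fun i => x i + nbr d j i) +
            Finset.univ.inf' ⟨⟨0, by omega⟩, Finset.mem_univ _⟩
              (fun j : Fin (2 * d) => u fun i => x i + nbr d j i)) +
        ((1 - α) / (2 * (d : ℝ))) * ∑ j : Fin (2 * d), u fun i => x i + nbr d j i) :
    ∀ x y : Fin d → ℤ, u x = u y := by
  have hsol : Sol d hd α u := ⟨hu, fun x => hharm x⟩
  by_cases hzero : ∃ x₀, u x₀ = 0
  · obtain ⟨x₀, h0⟩ := hzero
    have hall := sol_eq_of_le hd hα0 hα1 (sol_zero hd) hsol hu x₀ (by simpa using h0)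
    intro x y
    have hx := hall x
    have hy := hall y
    rw [hx, hy]
  · push_neg at hzero
    have hpos : ∀ x, 0 < u x := fun x => lt_of_le_of_ne (hu x) (Ne.symm (hzero x))
    set v : (Fin d → ℤ) → ℝ := fun z => (u 0)⁻¹ * u z with hv
    have hvSol : Sol d hd α v := sol_smul hd hsol ((u 0)⁻¹) (le_of_lt (inv_pos.2 (hpos 0)))
    have hv0 : v 0 = 1 := inv_mul_cancel₀ (ne_of_gt (hpos 0))
    have hmono : ∀ (z : Fin d → ℤ) (j : Fin (2*d)), v z ≤ v (Nb z j) :=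
      fun z j => ratios_ge_one hd hα0 hα1 hvSol hv0 j z
    have hconst : ∀ (z : Fin d → ℤ) (j : Fin (2*d)), v (Nb z j) = v z := by
      intro z j
      have h1 := hmono z j
      have h2 := hmono (Nb z j) (rev j)
      rw [Nb_rev] at h2
      linarith
    intro x y
    have hvconst : ∀ z, v z = v x :=
      spread (fun z => v z = v x) x rfl (fun z hz j => by
        show v (Nb z j) = v x
        rw [hconst z j]
        exact hz)
    have := hvconst y
    have hinv : (u 0)⁻¹ ≠ 0 := inv_ne_zero (ne_of_gt (hpos 0))
    have : (u 0)⁻¹ * u y = (u 0)⁻¹ * u x := this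
    exact (mul_left_cancel₀ hinv this).symm
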